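/- Strong Liouville property for discrete p-harmonic functions on ℤ²: Let 1 < p < ∞. If u : ℤ² → ℝ is nonnegative and satisfies Σ_{i=1}^{4} sign(u(x) − u(x+e_i))·|u(x) − u(x+e_i)|^{p−1} = 0 for every x ∈ ℤ², then u is constant. -/

import Mathlib

def nbr (d : ℕ) (j : Fin (2 * d)) : Fin d → ℤ :=
  fun i => if (j : ℕ) = (i : ℕ) then 1 else if (j : ℕ) = (i : ℕ) + d then -1 else 0

def IsFHarmonic (d : ℕ) (F : (Fin (2 * d) → ℝ) → ℝ) (u : (Fin d → ℤ) → ℝ) : Prop :=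
  ∀ x : Fin d → ℤ, u x = F fun j => u fun i => x i + nbr d j i

noncomputable def signPow (p s : ℝ) : ℝ := Real.sign s * |s| ^ (p - 1)

namespace LiouvilleZ2

variable {p : ℝ} (hp : 1 < p)

lemma signPow_of_nonneg {t : ℝ} (hp : 1 < p) (ht : 0 ≤ t) : signPow p t = t ^ (p - 1) := by
  rcases eq_or_lt_of_le ht with h | h
  · simp [signPow, ← h, Real.sign_zero, Real.zero_rpow (by linarith : p - 1 ≠ 0)]
  · rw [signPow, Real.sign_of_pos h, abs_of_pos h, one_mul]

lemma signPow_neg (t : ℝ) : signPow p (-t) = -signPow p t := by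
  rw [signPow, signPow, Real.sign_neg, abs_neg, neg_mul]

lemma signPow_nonneg {t : ℝ} (hp : 1 < p) (ht : 0 ≤ t) : 0 ≤ signPow p t := by
  rw [signPow_of_nonneg hp ht]
  exact Real.rpow_nonneg ht _

lemma signPow_pos {t : ℝ} (hp : 1 < p) (ht : 0 < t) : 0 < signPow p t := by
  rw [signPow_of_nonneg hp ht.le]
  exact Real.rpow_pos_of_pos ht _

lemma signPow_strictMono (hp : 1 < p) : StrictMono (signPow p) := by
  intro a b hab
  rcases le_or_gt 0 a with ha | ha
  · rw [signPow_of_nonneg hp ha, signPow_of_nonneg hp (le_trans ha hab.le)]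
    exact Real.rpow_lt_rpow ha hab (by linarith)
  · rcases le_or_gt 0 b with hb | hb
    · calc signPow p a = -signPow p (-a) := by rw [signPow_neg]; ring
        _ < 0 := by simpa using signPow_pos hp (by linarith : (0:ℝ) < -a)
        _ ≤ signPow p b := signPow_nonneg hp hb
    · have : signPow p (-b) < signPow p (-a) := by
        rw [signPow_of_nonneg hp (by linarith : (0:ℝ) ≤ -b),
          signPow_of_nonneg hp (by linarith : (0:ℝ) ≤ -a)]
        exact Real.rpow_lt_rpow (by linarith) (by linarith) (by linarith)
      have h1 := signPow_neg (p := p) a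
      have h2 := signPow_neg (p := p) b
      linarith

lemma signPow_injective (hp : 1 < p) : Function.Injective (signPow p) :=
  (signPow_strictMono hp).injective

lemma signPow_mul_pos {c : ℝ} (hp : 1 < p) (hc : 0 < c) (t : ℝ) :
    signPow p (c * t) = c ^ (p - 1) * signPow p t := by
  rcases lt_trichotomy t 0 with h | h | h
  · have h1 : c * t < 0 := mul_neg_of_pos_of_neg hc h
    rw [signPow, signPow, Real.sign_of_neg h, Real.sign_of_neg h1, abs_mul, abs_of_pos hc,
      Real.mul_rpow hc.le (abs_nonneg _)]
    ring
  · simp [h, signPow, Real.sign_zero]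
  · have h1 : 0 < c * t := mul_pos hc h
    rw [signPow_of_nonneg hp h1.le, signPow_of_nonneg hp h.le,
      Real.mul_rpow hc.le h.le]

lemma signPow_le_of_le {t c : ℝ} (hp : 1 < p) (hc : 0 < c) (htc : t ≤ c) :
    signPow p t ≤ c ^ (p - 1) := by
  rcases le_or_gt t 0 with h | h
  · calc signPow p t = -signPow p (-t) := by rw [signPow_neg]; ring
      _ ≤ 0 := by simpa using signPow_nonneg hp (by linarith : (0:ℝ) ≤ -t)
      _ ≤ c ^ (p - 1) := (Real.rpow_pos_of_pos hc _).le
  · rw [signPow_of_nonneg hp h.le]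
    exact Real.rpow_le_rpow h.le htc (by linarith)

lemma le_of_signPow_le {a t : ℝ} (hp : 1 < p) (ha : 0 < a) (h : a ≤ signPow p t) :
    a ^ (1 / (p - 1)) ≤ t := by
  have hp1 : (0:ℝ) < p - 1 := by linarith
  have ht : 0 < t := by
    by_contra hc
    push_neg at hc
    have : signPow p t ≤ 0 := by
      calc signPow p t = -signPow p (-t) := by rw [signPow_neg]; ring
        _ ≤ 0 := by simpa using signPow_nonneg hp (by linarith : (0:ℝ) ≤ -t)
    linarith
  rw [signPow_of_nonneg hp ht.le] at h
  by_contra hlt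
  push_neg at hlt
  have h2 : t ^ (p-1) < (a ^ (1/(p-1))) ^ (p - 1) :=
    Real.rpow_lt_rpow ht.le hlt hp1
  rw [← Real.rpow_mul ha.le, one_div, inv_mul_cancel₀ (ne_of_gt hp1), Real.rpow_one] at h2
  linarith

lemma continuous_signPow (hp : 1 < p) : Continuous (signPow p) := by
  have hform : ∀ t : ℝ, signPow p t = (max t 0) ^ (p-1) - (max (-t) 0) ^ (p-1) := by
    intro t
    rcases lt_trichotomy t 0 with h | h | h
    · rw [max_eq_right h.le, max_eq_left (by linarith : (0:ℝ) ≤ -t),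
        Real.zero_rpow (by linarith : p - 1 ≠ 0)]
      have := signPow_neg (p := p) t
      have h2 := signPow_of_nonneg hp (by linarith : (0:ℝ) ≤ -t)
      linarith [signPow_neg (p := p) t]
    · simp [h, signPow, Real.sign_zero, Real.zero_rpow (by linarith : p - 1 ≠ 0)]
    · rw [max_eq_left h.le, max_eq_right (by linarith : -t ≤ 0),
        Real.zero_rpow (by linarith : p - 1 ≠ 0), signPow_of_nonneg hp h.le]
      ring
  have hc : Continuous fun t : ℝ => (max t 0) ^ (p-1) := by
    apply continuous_iff_continuousAt.mpr
    intro t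
    exact (Real.continuousAt_rpow_const _ _ (Or.inr (by linarith))).comp
      ((continuous_id.max continuous_const).continuousAt)
  have hc2 : Continuous fun t : ℝ => (max (-t) 0) ^ (p-1) := by
    apply continuous_iff_continuousAt.mpr
    intro t
    exact (Real.continuousAt_rpow_const _ _ (Or.inr (by linarith))).comp
      ((continuous_neg.max continuous_const).continuousAt)
  have : Continuous fun t : ℝ => (max t 0) ^ (p-1) - (max (-t) 0) ^ (p-1) := hc.sub hc2
  exact this.congr fun t => (hform t).symm


abbrev X := Fin 2 → ℤ

def e (j : Fin 4) : X := nbr 2 j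

/-- The four-term form of the p-harmonic equation. -/
def Harm (p : ℝ) (u : X → ℝ) : Prop :=
  ∀ x : X, signPow p (u x - u (x + e 0)) + signPow p (u x - u (x + e 1))
    + signPow p (u x - u (x + e 2)) + signPow p (u x - u (x + e 3)) = 0

lemma e_zero : e 0 = ![1, 0] := by
  funext i; fin_cases i <;> rfl

lemma e_one : e 1 = ![0, 1] := by
  funext i; fin_cases i <;> rfl

lemma e_two : e 2 = ![-1, 0] := by
  funext i; fin_cases i <;> rfl

lemma e_three : e 3 = ![0, -1] := by
  funext i; fin_cases i <;> rfl

lemma e_two_eq_neg : e 2 = -e 0 := by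
  funext i; fin_cases i <;> rfl

lemma e_three_eq_neg : e 3 = -e 1 := by
  funext i; fin_cases i <;> rfl

lemma harm_of_sum (u : (Fin 2 → ℤ) → ℝ)
    (hharm : ∀ x : Fin 2 → ℤ,
      ∑ j : Fin (2 * 2), signPow p (u x - u fun i => x i + nbr 2 j i) = 0) :
    Harm p u := by
  intro x
  have h := hharm x
  have h4 : ∀ (f : Fin (2*2) → ℝ), (∑ j, f j) = f 0 + f 1 + f 2 + f 3 :=
    fun f => Fin.sum_univ_four f
  rw [h4] at h
  have hx : ∀ j : Fin 4, (fun i => x i + nbr 2 j i) = x + e j := fun j => rfl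
  convert h using 2 <;> rfl

/-- Reachability: any property preserved by neighbor steps holds everywhere. -/
lemma reach (P : X → Prop) (h0 : P 0) (hstep : ∀ x, P x → ∀ j, P (x + e j)) :
    ∀ x, P x := by
  have key : ∀ a b : ℤ, P ![a, b] := by
    have hb : ∀ b : ℤ, P ![0, b] := by
      intro b
      induction b using Int.induction_on with
      | zero => convert h0 using 1; funext i; fin_cases i <;> rfl
      | succ n ih =>
        have := hstep _ ih 1
        convert this using 1
        funext i; fin_cases i <;> simp [e_one] <;> ring
      | pred n ih =>
        have := hstep _ ih 3
        convert this using 1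
        funext i; fin_cases i <;> simp [e_three] <;> ring
    intro a b
    induction a using Int.induction_on with
    | zero => exact hb b
    | succ n ih =>
      have := hstep _ ih 0
      convert this using 1
      funext i; fin_cases i <;> simp [e_zero] <;> ring
    | pred n ih =>
      have := hstep _ ih 2
      convert this using 1
      funext i; fin_cases i <;> simp [e_two] <;> ring
  intro x
  have : x = ![x 0, x 1] := by funext i; fin_cases i <;> rfl
  rw [this]
  exact key _ _

/-- the ℓ¹ norm -/
def norm1 (x : X) : ℕ := (x 0).natAbs + (x 1).natAbs

lemma norm1_zero_iff (x : X) : norm1 x = 0 ↔ x = 0 := by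
  constructor
  · intro h
    have h0 : x 0 = 0 := by simp [norm1] at h; omega
    have h1 : x 1 = 0 := by simp [norm1] at h; omega
    funext i; fin_cases i <;> assumption
  · intro h; subst h; rfl

lemma decomp (y : X) (n : ℕ) (h : norm1 y = n + 1) :
    ∃ (y' : X) (j : Fin 4), y = y' + e j ∧ norm1 y' = n := by
  unfold norm1 at h
  rcases lt_trichotomy (y 0) 0 with h0 | h0 | h0
  · refine ⟨y - e 2, 2, by ring, ?_⟩
    have e20 : e 2 0 = -1 := rfl
    have e21 : e 2 1 = 0 := rfl
    have : (y - e 2) 0 = y 0 + 1 := by simp [e20]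
    have h1 : (y - e 2) 1 = y 1 := by simp [e21]
    simp only [norm1, this, h1]
    omega
  · rcases lt_trichotomy (y 1) 0 with h1 | h1 | h1
    · refine ⟨y - e 3, 3, by ring, ?_⟩
      have : (y - e 3) 0 = y 0 := by simp [show e 3 0 = 0 from rfl]
      have h2 : (y - e 3) 1 = y 1 + 1 := by simp [show e 3 1 = -1 from rfl]
      simp only [norm1, this, h2]
      omega
    · omega
    · refine ⟨y - e 1, 1, by ring, ?_⟩
      have : (y - e 1) 0 = y 0 := by simp [show e 1 0 = 0 from rfl]
      have h2 : (y - e 1) 1 = y 1 - 1 := by simp [show e 1 1 = 1 from rfl]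
      simp only [norm1, this, h2]
      omega
  · refine ⟨y - e 0, 0, by ring, ?_⟩
    have : (y - e 0) 0 = y 0 - 1 := by simp [show e 0 0 = 1 from rfl]
    have h2 : (y - e 0) 1 = y 1 := by simp [show e 0 1 = 0 from rfl]
    simp only [norm1, this, h2]
    omega


lemma harm_translate {u : X → ℝ} (h : Harm p u) (z : X) :
    Harm p (fun y => u (y + z)) := by
  intro x
  have := h (x + z)
  simpa [add_right_comm] using this

lemma harm_smul {u : X → ℝ} (hp : 1 < p) (h : Harm p u) {c : ℝ} (hc : 0 < c) :
    Harm p (fun y => c * u y) := by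
  intro x
  have h1 := h x
  have key : ∀ a b : ℝ, signPow p (c * a - c * b) = c ^ (p-1) * signPow p (a - b) := by
    intro a b
    rw [show c * a - c * b = c * (a - b) by ring, signPow_mul_pos hp hc]
  simp only [key]
  have : c ^ (p-1) * (signPow p (u x - u (x + e 0)) + signPow p (u x - u (x + e 1))
    + signPow p (u x - u (x + e 2)) + signPow p (u x - u (x + e 3))) = 0 := by
    rw [h1, mul_zero]
  linarith [this]

/-- Pointwise Harnack constant. -/
noncomputable def K (p : ℝ) : ℝ := 1 + (3:ℝ) ^ (1 / (p - 1))

lemma one_lt_K (hp : 1 < p) : 1 < K p := by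
  have h3 : (0:ℝ) < (3:ℝ) ^ (1 / (p - 1)) := Real.rpow_pos_of_pos (by norm_num) _
  unfold K; linarith

lemma K_pos (hp : 1 < p) : 0 < K p := lt_trans one_pos (one_lt_K hp)

/-- Pointwise Harnack across an edge. -/
lemma edge_harnack {u : X → ℝ} (hp : 1 < p) (h : Harm p u) (hpos : ∀ x, 0 < u x)
    (x : X) (j : Fin 4) : u (x + e j) ≤ K p * u x := by
  by_contra hcon
  push_neg at hcon
  have hux : 0 < u x := hpos x
  have hb : ∀ j' : Fin 4, signPow p (u x - u (x + e j')) ≤ (u x) ^ (p-1) := by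
    intro j'
    exact signPow_le_of_le hp hux (by linarith [hpos (x + e j')])
  have heq := h x
  -- signPow p (u x - u (x+e j)) ≥ -3 (u x)^(p-1)
  have hterm : -(3 * (u x) ^ (p-1)) ≤ signPow p (u x - u (x + e j)) := by
    have h0 := hb 0; have h1 := hb 1; have h2 := hb 2; have h3 := hb 3
    fin_cases j
    · show -(3 * (u x) ^ (p-1)) ≤ signPow p (u x - u (x + e 0)); linarith
    · show -(3 * (u x) ^ (p-1)) ≤ signPow p (u x - u (x + e 1)); linarith
    · show -(3 * (u x) ^ (p-1)) ≤ signPow p (u x - u (x + e 2)); linarith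
    · show -(3 * (u x) ^ (p-1)) ≤ signPow p (u x - u (x + e 3)); linarith
  -- but u(x+e j) > K u x forces it to be < -3 (u x)^(p-1)
  have hgap : (3:ℝ) ^ (1/(p-1)) * u x < u (x + e j) - u x := by
    have := hcon
    simp only [K] at this
    linarith
  have h3 : (0:ℝ) < (3:ℝ) ^ (1/(p-1)) * u x :=
    mul_pos (Real.rpow_pos_of_pos (by norm_num) _) hux
  have hmono := signPow_strictMono hp hgap
  have hval : signPow p ((3:ℝ) ^ (1/(p-1)) * u x) = 3 * (u x) ^ (p-1) := by
    rw [signPow_of_nonneg hp h3.le, Real.mul_rpow (Real.rpow_nonneg (by norm_num) _) hux.le,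
      ← Real.rpow_mul (by norm_num : (0:ℝ) ≤ 3), one_div,
      inv_mul_cancel₀ (sub_ne_zero.mpr (ne_of_gt hp)),
      Real.rpow_one]
  rw [hval] at hmono
  have hodd : signPow p (u (x + e j) - u x) = -signPow p (u x - u (x + e j)) := by
    rw [show u (x + e j) - u x = -(u x - u (x + e j)) by ring, signPow_neg]
  rw [hodd] at hmono
  linarith

/-- Chained Harnack bound. -/
lemma chain_harnack {u : X → ℝ} (hp : 1 < p) (h : Harm p u) (hpos : ∀ x, 0 < u x) :
    ∀ (n : ℕ) (y : X), norm1 y = n → ∀ x, u (x + y) ≤ (K p) ^ n * u x := by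
  intro n
  induction n with
  | zero =>
    intro y hy x
    rw [(norm1_zero_iff y).mp hy]
    simp
  | succ n ih =>
    intro y hy x
    obtain ⟨y', j, rfl, hy'⟩ := decomp y n hy
    have h1 : u (x + (y' + e j)) ≤ K p * u (x + y') := by
      have := edge_harnack hp h hpos (x + y') j
      simpa [add_assoc] using this
    have h2 := ih y' hy' x
    have hK := K_pos hp
    calc u (x + (y' + e j)) ≤ K p * u (x + y') := h1
      _ ≤ K p * ((K p) ^ n * u x) := by
        apply mul_le_mul_of_nonneg_left h2 hK.le
      _ = (K p) ^ (n+1) * u x := by ring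


/-- The normalized Harnack-bounded family. -/
def F (p : ℝ) : Set (X → ℝ) :=
  {v | Harm p v ∧ ∀ x, ((K p) ^ (norm1 x))⁻¹ ≤ v x ∧ v x ≤ (K p) ^ (norm1 x)}

lemma F_pos (hp : 1 < p) {v : X → ℝ} (hv : v ∈ F p) : ∀ x, 0 < v x := by
  intro x
  have := (hv.2 x).1
  have hK : (0:ℝ) < (K p) ^ (norm1 x) := pow_pos (K_pos hp) _
  calc (0:ℝ) < ((K p) ^ (norm1 x))⁻¹ := by positivity
    _ ≤ v x := this

lemma F_at_zero (hp : 1 < p) {v : X → ℝ} (hv : v ∈ F p) : v 0 = 1 := by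
  have h := hv.2 0
  have : norm1 0 = 0 := rfl
  rw [this] at h
  simp at h
  linarith [h.1, h.2]

lemma one_mem_F (hp : 1 < p) : (fun _ : X => (1:ℝ)) ∈ F p := by
  constructor
  · intro x; simp [signPow, Real.sign_zero]
  · intro x
    have h1 : (1:ℝ) ≤ (K p) ^ (norm1 x) := one_le_pow₀ (one_lt_K hp).le
    constructor
    · rw [inv_le_one_iff₀]; right; exact h1
    · exact h1

/-- normalized translates of positive Harm functions are in F -/
lemma translate_mem_F (hp : 1 < p) {v : X → ℝ} (hv : Harm p v) (hpos : ∀ x, 0 < v x)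
    (z : X) : (fun y => (v z)⁻¹ * v (z + y)) ∈ F p := by
  have hvz : 0 < v z := hpos z
  constructor
  · have h1 : Harm p (fun y => v (y + z)) := harm_translate hv z
    have h2 : Harm p (fun y => (v z)⁻¹ * v (y + z)) := harm_smul hp h1 (by positivity)
    intro x
    have := h2 x
    simpa [add_comm] using this
  · intro x
    have hub : v (z + x) ≤ (K p) ^ (norm1 x) * v z :=
      chain_harnack hp hv hpos (norm1 x) x rfl z
    have hlb : v z ≤ (K p) ^ (norm1 x) * v (z + x) := by
      have h1 : v ((z + x) + (-x)) ≤ (K p) ^ (norm1 (-x)) * v (z + x) :=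
        chain_harnack hp hv hpos (norm1 (-x)) (-x) rfl (z + x)
      have h2 : norm1 (-x) = norm1 x := by
        simp [norm1]
      have h3 : (z + x) + (-x) = z := by ring
      rw [h2, h3] at h1
      exact h1
    have hKn : (0:ℝ) < (K p) ^ (norm1 x) := pow_pos (K_pos hp) _
    constructor
    · show ((K p) ^ (norm1 x))⁻¹ ≤ (v z)⁻¹ * v (z + x)
      rw [le_inv_mul_iff₀ hvz, mul_inv_le_iff₀ hKn]
      nlinarith
    · show (v z)⁻¹ * v (z + x) ≤ (K p) ^ (norm1 x)
      rw [inv_mul_le_iff₀ hvz]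
      calc v (z + x) ≤ (K p) ^ (norm1 x) * v z := hub
        _ = v z * (K p) ^ (norm1 x) := by ring

lemma F_isCompact (hp : 1 < p) : IsCompact (F p) := by
  have hsub : F p ⊆ Set.pi Set.univ
      (fun x => Set.Icc (((K p) ^ (norm1 x))⁻¹) ((K p) ^ (norm1 x))) := by
    intro v hv x _
    exact ⟨(hv.2 x).1, (hv.2 x).2⟩
  have hcomp : IsCompact (Set.pi Set.univ
      (fun x : X => Set.Icc (((K p) ^ (norm1 x))⁻¹) ((K p) ^ (norm1 x)))) :=
    isCompact_univ_pi fun x => isCompact_Icc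
  have hclosed : IsClosed (F p) := by
    have h1 : IsClosed {v : X → ℝ | Harm p v} := by
      have : {v : X → ℝ | Harm p v} = ⋂ x : X,
          {v : X → ℝ | signPow p (v x - v (x + e 0)) + signPow p (v x - v (x + e 1))
            + signPow p (v x - v (x + e 2)) + signPow p (v x - v (x + e 3)) = 0} := by
        ext v; simp [Harm, Set.mem_iInter]
      rw [this]
      apply isClosed_iInter
      intro x
      have hcont : Continuous (fun v : X → ℝ =>
          signPow p (v x - v (x + e 0)) + signPow p (v x - v (x + e 1))
            + signPow p (v x - v (x + e 2)) + signPow p (v x - v (x + e 3))) := by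
        have hterm : ∀ y z : X, Continuous (fun v : X → ℝ => signPow p (v y - v z)) :=
          fun y z => (continuous_signPow hp).comp ((continuous_apply y).sub (continuous_apply z))
        exact (((hterm _ _).add (hterm _ _)).add (hterm _ _)).add (hterm _ _)
      exact isClosed_eq hcont continuous_const
    have h2 : IsClosed {v : X → ℝ | ∀ x, ((K p) ^ (norm1 x))⁻¹ ≤ v x ∧ v x ≤ (K p) ^ (norm1 x)} := by
      have : {v : X → ℝ | ∀ x, ((K p) ^ (norm1 x))⁻¹ ≤ v x ∧ v x ≤ (K p) ^ (norm1 x)} =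
          ⋂ x : X, {v : X → ℝ | v x ∈ Set.Icc (((K p) ^ (norm1 x))⁻¹) ((K p) ^ (norm1 x))} := by
        ext v; simp [Set.mem_iInter, Set.mem_Icc]
      rw [this]
      exact isClosed_iInter fun x => (isClosed_Icc).preimage (continuous_apply x)
    exact h1.inter h2
  exact hcomp.of_isClosed_subset hclosed hsub

/-- Strong comparison / equality propagation. -/
lemma strong_comparison {v w : X → ℝ} (hp : 1 < p) (hv : Harm p v) (hw : Harm p w)
    (hle : ∀ x, w x ≤ v x) (h0 : v 0 = w 0) : ∀ x, v x = w x := by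
  apply reach (fun x => v x = w x) h0
  intro x hx j
  -- at x, all four neighbors must agree
  have hv1 := hv x
  have hw1 := hw x
  have hterm : ∀ j' : Fin 4,
      signPow p (v x - v (x + e j')) ≤ signPow p (w x - w (x + e j')) := by
    intro j'
    rw [hx]
    exact (signPow_strictMono hp).monotone (by linarith [hle (x + e j')])
  have heach : ∀ j' : Fin 4,
      signPow p (v x - v (x + e j')) = signPow p (w x - w (x + e j')) := by
    intro j'
    have h0'' := hterm 0; have h1'' := hterm 1; have h2'' := hterm 2; have h3'' := hterm 3
    fin_cases j'
    · show signPow p (v x - v (x + e 0)) = signPow p (w x - w (x + e 0)); linarith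
    · show signPow p (v x - v (x + e 1)) = signPow p (w x - w (x + e 1)); linarith
    · show signPow p (v x - v (x + e 2)) = signPow p (w x - w (x + e 2)); linarith
    · show signPow p (v x - v (x + e 3)) = signPow p (w x - w (x + e 3)); linarith
  have hj := heach j
  rw [hx] at hj
  have hj2 := signPow_injective hp hj
  linarith

/-- Existence of a maximizer with exact multiplicative relation. -/
lemma exists_max (hp : 1 < p) (z : X) :
    ∃ (ustar : X → ℝ) (S : ℝ), ustar ∈ F p ∧ S = ustar z ∧ 1 ≤ S ∧
      (∀ v : X → ℝ, Harm p v → (∀ x, 0 < v x) → ∀ x, v (x + z) ≤ S * v x) ∧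
      (∀ x, ustar (x + z) = S * ustar x) := by
  obtain ⟨ustar, hmem, hmax'⟩ :=
    (F_isCompact hp).exists_isMaxOn ⟨_, one_mem_F hp⟩
      ((continuous_apply z).continuousOn)
  have hmax : ∀ v ∈ F p, v z ≤ ustar z := fun v hv => hmax' hv
  set S := ustar z with hS
  have hS1 : 1 ≤ S := by
    have := hmax _ (one_mem_F hp)
    simpa using this
  have hSpos : 0 < S := by linarith
  have hbound : ∀ v : X → ℝ, Harm p v → (∀ x, 0 < v x) → ∀ x, v (x + z) ≤ S * v x := by
    intro v hv hpos x
    have hmem2 := translate_mem_F hp hv hpos x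
    have := hmax _ hmem2
    have hvx : 0 < v x := hpos x
    replace this : (v x)⁻¹ * v (x + z) ≤ S := this
    calc v (x + z) = v x * ((v x)⁻¹ * v (x + z)) := by field_simp
      _ ≤ v x * S := mul_le_mul_of_nonneg_left this hvx.le
      _ = S * v x := by ring
  have hustar_harm : Harm p ustar := hmem.1
  have hustar_pos := F_pos hp hmem
  -- w := S⁻¹ * ustar(· + z)
  have hw_harm : Harm p (fun y => S⁻¹ * ustar (y + z)) :=
    harm_smul hp (harm_translate hustar_harm z) (by positivity)
  have hw_le : ∀ x, S⁻¹ * ustar (x + z) ≤ ustar x := by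
    intro x
    have := hbound ustar hustar_harm hustar_pos x
    rw [inv_mul_le_iff₀ hSpos]
    linarith
  have hw0 : ustar 0 = S⁻¹ * ustar (0 + z) := by
    have h1 : ustar 0 = 1 := F_at_zero hp hmem
    rw [h1, show (0:X) + z = z from by ring, ← hS]
    field_simp
  have heq := strong_comparison hp hustar_harm hw_harm hw_le hw0
  refine ⟨ustar, S, hmem, rfl, hS1, hbound, ?_⟩
  intro x
  have := heq x
  have : ustar x = S⁻¹ * ustar (x + z) := this
  field_simp at this
  linarith


/-- 1-D lemma: no positive function on ℤ with strictly increasing flux. -/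
lemma oneD (hp : 1 < p) (g : ℤ → ℝ) (hg : ∀ n, 0 < g n) (δ : ℤ → ℝ) (hδ : ∀ n, 0 < δ n)
    (he : ∀ n, signPow p (g n - g (n+1)) + signPow p (g n - g (n-1)) = δ n) : False := by
  set f : ℤ → ℝ := fun n => signPow p (g n - g (n+1)) with hf
  have hstep : ∀ n : ℤ, f n = f (n-1) + δ n := by
    intro n
    have h1 := he n
    have h2 : signPow p (g n - g (n-1)) = -f (n-1) := by
      rw [hf]
      simp only
      rw [show (n - 1 : ℤ) + 1 = n by ring,
        show g (n-1) - g n = -(g n - g (n-1)) by ring, signPow_neg, neg_neg]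
    rw [h2] at h1
    linarith
  by_cases hex : ∃ n₀, 0 < f n₀
  · obtain ⟨n₀, ha⟩ := hex
    have mono : ∀ m : ℕ, f n₀ ≤ f (n₀ + m) := by
      intro m
      induction m with
      | zero => simp
      | succ m ih =>
        have := hstep (n₀ + m + 1)
        have hidx : (n₀ + (m:ℤ) + 1) - 1 = n₀ + m := by ring
        rw [hidx] at this
        have := hδ (n₀ + m + 1)
        have hcast : ((m+1 : ℕ) : ℤ) = (m : ℤ) + 1 := by push_cast; ring
        rw [show n₀ + ((m:ℕ)+1 : ℕ) = n₀ + (m:ℤ) + 1 by omega]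
        linarith [hstep (n₀ + (m:ℤ) + 1)]
    set b := (f n₀) ^ (1/(p-1)) with hb
    have hbpos : 0 < b := Real.rpow_pos_of_pos ha _
    have hdec : ∀ m : ℕ, b ≤ g (n₀ + m) - g (n₀ + m + 1) := by
      intro m
      apply le_of_signPow_le hp ha
      exact le_trans (mono m) (le_of_eq rfl)
    have hsum : ∀ m : ℕ, g (n₀ + m) ≤ g n₀ - m * b := by
      intro m
      induction m with
      | zero => simp
      | succ m ih =>
        have h1 := hdec m
        have : g (n₀ + (m:ℤ) + 1) ≤ g (n₀ + m) - b := by linarith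
        rw [show n₀ + ((m+1 : ℕ) : ℤ) = n₀ + (m:ℤ) + 1 by omega]
        push_cast
        calc g (n₀ + (m:ℤ) + 1) ≤ g (n₀ + m) - b := this
          _ ≤ g n₀ - m * b - b := by linarith
          _ = g n₀ - ((m:ℝ) + 1) * b := by ring
    obtain ⟨m, hm⟩ := exists_nat_gt (g n₀ / b)
    have h1 := hsum m
    have h2 : g n₀ < m * b := by
      rw [div_lt_iff₀ hbpos] at hm
      linarith
    linarith [hg (n₀ + m)]
  · push_neg at hex
    set a := δ 0 with ha
    have hapos : 0 < a := hδ 0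
    have hneg : ∀ m : ℕ, f (-1 - m) ≤ -a := by
      intro m
      induction m with
      | zero =>
        have := hstep 0
        have h0 := hex 0
        simp only [show (0:ℤ) - 1 = -1 - (0:ℕ) by simp] at this
        linarith
      | succ m ih =>
        have := hstep (-1 - m)
        have hidx : (-1 - (m:ℤ)) - 1 = -1 - ((m+1 : ℕ) : ℤ) := by push_cast; ring
        rw [hidx] at this
        have := hδ (-1 - m)
        linarith [hstep (-1 - (m:ℤ))]
    set b := a ^ (1/(p-1)) with hb
    have hbpos : 0 < b := Real.rpow_pos_of_pos hapos _
    have hinc : ∀ m : ℕ, b ≤ g (-1 - m + 1) - g (-1 - m) := by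
      intro m
      apply le_of_signPow_le hp hapos
      have h1 := hneg m
      have h2 : signPow p (g (-1-m+1) - g (-1-m)) = -signPow p (g (-1-m) - g (-1-m+1)) := by
        rw [show g (-1-(m:ℤ)+1) - g (-1-m) = -(g (-1-m) - g (-1-m+1)) by ring, signPow_neg]
      rw [h2]
      have : f (-1 - m) = signPow p (g (-1-m) - g (-1-m+1)) := rfl
      linarith
    have hsum : ∀ m : ℕ, g (-(m:ℤ)) ≤ g 0 - m * b := by
      intro m
      induction m with
      | zero => simp
      | succ m ih =>
        have h1 := hinc m
        have hidx1 : (-1 - (m:ℤ)) + 1 = -(m:ℤ) := by ring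
        have hidx2 : (-1 - (m:ℤ)) = -((m:ℤ)+1) := by ring
        rw [hidx1, hidx2] at h1
        rw [show (-(((m+1):ℕ):ℤ)) = -((m:ℤ)+1) by omega]
        push_cast
        linarith
    obtain ⟨m, hm⟩ := exists_nat_gt (g 0 / b)
    have h1 := hsum m
    have h2 : g 0 < m * b := by
      rw [div_lt_iff₀ hbpos] at hm
      linarith
    linarith [hg (-(m:ℤ))]

/-- If the maximizer ratio exceeds 1 in some direction we get a contradiction. -/
lemma no_strict (hp : 1 < p) (S : ℝ) (hS : 1 < S) (ustar : X → ℝ)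
    (hpos : ∀ x, 0 < ustar x) (d t : X)
    (hharm' : ∀ x, signPow p (ustar x - ustar (x + d)) + signPow p (ustar x - ustar (x - d))
      + signPow p (ustar x - ustar (x + t)) + signPow p (ustar x - ustar (x - t)) = 0)
    (hd : ∀ x, ustar (x + d) = S * ustar x) : False := by
  have hSpos : (0:ℝ) < S := by linarith
  have hd' : ∀ x, ustar (x - d) = S⁻¹ * ustar x := by
    intro x
    have := hd (x - d)
    rw [sub_add_cancel] at this
    field_simp
    linarith [this]
  set g : ℤ → ℝ := fun n => ustar (n • t) with hg
  have hgpos : ∀ n, 0 < g n := fun n => hpos _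
  have hplus : ∀ n : ℤ, (n • t) + t = (n+1) • t := by
    intro n; rw [add_zsmul, one_zsmul]
  have hminus : ∀ n : ℤ, (n • t) - t = (n-1) • t := by
    intro n; rw [sub_zsmul, one_zsmul]; abel
  set c : ℝ := (S-1) ^ (p-1) - (1 - S⁻¹) ^ (p-1) with hc
  have hcpos : 0 < c := by
    rw [hc]
    have h1 : (0:ℝ) < 1 - S⁻¹ := by
      rw [sub_pos, inv_lt_one_iff₀]
      right; exact hS
    have h2 : 1 - S⁻¹ < S - 1 := by
      have key : S - 1 - (1 - S⁻¹) = (S-1)^2 / S := by field_simp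
      have hsq : (0:ℝ) < (S-1)^2 := by nlinarith
      have : (0:ℝ) < (S-1)^2 / S := div_pos hsq hSpos
      linarith
    have := Real.rpow_lt_rpow h1.le h2 (by linarith : (0:ℝ) < p - 1)
    linarith
  have heq : ∀ n : ℤ, signPow p (g n - g (n+1)) + signPow p (g n - g (n-1))
      = c * (g n) ^ (p-1) := by
    intro n
    have h1 := hharm' (n • t)
    rw [hd (n • t), hd' (n • t), hplus n, hminus n] at h1
    have ht1 : signPow p (ustar (n • t) - S * ustar (n • t))
        = -((S-1) ^ (p-1) * (ustar (n • t)) ^ (p-1)) := by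
      rw [show ustar (n • t) - S * ustar (n • t) = -((S - 1) * ustar (n • t)) by ring,
        signPow_neg, signPow_mul_pos hp (by linarith : (0:ℝ) < S - 1),
        signPow_of_nonneg hp (hpos _).le]
    have ht2 : signPow p (ustar (n • t) - S⁻¹ * ustar (n • t))
        = (1 - S⁻¹) ^ (p-1) * (ustar (n • t)) ^ (p-1) := by
      have hpos1 : (0:ℝ) < 1 - S⁻¹ := by
        rw [sub_pos, inv_lt_one_iff₀]; right; exact hS
      rw [show ustar (n • t) - S⁻¹ * ustar (n • t) = (1 - S⁻¹) * ustar (n • t) by ring,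
        signPow_mul_pos hp hpos1, signPow_of_nonneg hp (hpos _).le]
    rw [ht1, ht2] at h1
    have : g n = ustar (n • t) := rfl
    rw [this]
    rw [hc]
    simp only [hg]
    ring_nf
    ring_nf at h1
    linarith
  exact oneD hp g hgpos (fun n => c * (g n) ^ (p-1))
    (fun n => mul_pos hcpos (Real.rpow_pos_of_pos (hgpos n) _)) heq


lemma sub_ed (x : X) : x + e 2 = x - e 0 := by rw [e_two_eq_neg, sub_eq_add_neg]
lemma sub_et (x : X) : x + e 3 = x - e 1 := by rw [e_three_eq_neg, sub_eq_add_neg]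
lemma sub_ed' (x : X) : x + e 0 = x - e 2 := by rw [e_two_eq_neg, sub_neg_eq_add]
lemma sub_et' (x : X) : x + e 1 = x - e 3 := by rw [e_three_eq_neg, sub_neg_eq_add]

/-- In each lattice direction, positive p-harmonic functions are non-increasing. -/
lemma dir_mono (hp : 1 < p) (j : Fin 4) :
    ∀ v : X → ℝ, Harm p v → (∀ x, 0 < v x) → ∀ x, v (x + e j) ≤ v x := by
  obtain ⟨ustar, S, hmem, hSdef, hS1, hbound, hrel⟩ := exists_max hp (e j)
  have hupos := F_pos hp hmem
  have huharm : Harm p ustar := hmem.1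
  have hS_eq : S = 1 := by
    by_contra hne
    have hS : 1 < S := lt_of_le_of_ne hS1 (Ne.symm hne)
    have hhx := fun x => huharm x
    fin_cases j
    · exact no_strict hp S hS ustar hupos (e 0) (e 1)
        (fun x => by have h := huharm x; rw [sub_ed x, sub_et x] at h; linarith) hrel
    · exact no_strict hp S hS ustar hupos (e 1) (e 0)
        (fun x => by have h := huharm x; rw [sub_ed x, sub_et x] at h; linarith) hrel
    · exact no_strict hp S hS ustar hupos (e 2) (e 1)
        (fun x => by have h := huharm x; rw [sub_ed' x, sub_et x] at h; linarith) hrel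
    · exact no_strict hp S hS ustar hupos (e 3) (e 0)
        (fun x => by have h := huharm x; rw [sub_et' x, sub_ed x] at h; linarith) hrel
  intro v hv hvpos x
  have := hbound v hv hvpos x
  rw [hS_eq] at this
  linarith

/-- Every positive p-harmonic function on ℤ² is constant. -/
lemma pos_harm_const (hp : 1 < p) (v : X → ℝ) (hv : Harm p v) (hvpos : ∀ x, 0 < v x) :
    ∀ x y : X, v x = v y := by
  have hmono : ∀ j x, v (x + e j) ≤ v x := fun j x => dir_mono hp j v hv hvpos x
  have hopp : ∀ (j j' : Fin 4), e j + e j' = 0 → ∀ x, v (x + e j) = v x := by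
    intro j j' hjj' x
    have h1 := hmono j x
    have h2 := hmono j' (x + e j)
    rw [add_assoc, hjj', add_zero] at h2
    linarith
  have h02 : e 0 + e 2 = 0 := by rw [e_two_eq_neg]; abel
  have h13 : e 1 + e 3 = 0 := by rw [e_three_eq_neg]; abel
  have h20 : e 2 + e 0 = 0 := by rw [e_two_eq_neg]; abel
  have h31 : e 3 + e 1 = 0 := by rw [e_three_eq_neg]; abel
  have hstep : ∀ x (j : Fin 4), v (x + e j) = v x := by
    intro x j
    fin_cases j
    · exact hopp 0 2 h02 x
    · exact hopp 1 3 h13 x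
    · exact hopp 2 0 h20 x
    · exact hopp 3 1 h31 x
  intro x y
  have hP : ∀ z, v (x + z) = v x := by
    apply reach (fun z => v (x + z) = v x)
    · simp
    · intro z hz j
      rw [← add_assoc, hstep (x + z) j, hz]
  have := hP (y - x)
  rw [show x + (y - x) = y by abel] at this
  exact this.symm

end LiouvilleZ2

theorem liouville_pharmonic_Z2 (p : ℝ) (hp : 1 < p)
    (u : (Fin 2 → ℤ) → ℝ) (hu : ∀ x, 0 ≤ u x)
    (hharm : ∀ x : Fin 2 → ℤ,
      ∑ j : Fin (2 * 2), signPow p (u x - u fun i => x i + nbr 2 j i) = 0) :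
    ∀ x y : Fin 2 → ℤ, u x = u y := by
  intro x y
  have hu_harm : LiouvilleZ2.Harm p u := LiouvilleZ2.harm_of_sum u hharm
  set v : LiouvilleZ2.X → ℝ := fun z => u z + 1 with hv
  have hdiff : ∀ a b : LiouvilleZ2.X, v a - v b = u a - u b := by
    intro a b; simp [hv]
  have hv_harm : LiouvilleZ2.Harm p v := by
    intro z
    have := hu_harm z
    simpa only [hdiff] using this
  have hv_pos : ∀ z, 0 < v z := by
    intro z; have := hu z; simp [hv]; linarith
  have := LiouvilleZ2.pos_harm_const hp v hv_harm hv_pos x y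
  simp [hv] at this
  linarith
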